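/- Let f be a C^{1} diffeomorphism of a compact manifold admitting two dominated splittings TM = E₁ ⊕_{≻} F₁ = E₂ ⊕_{≻} F₂. If dim E₁ = dim E₂, then E₁ = E₂ and F₁ = F₂ (uniqueness of dominated splittings of a given index). If dim E₁ < dim E₂, then E₁ ⊂ E₂. -/
import Mathlib


/-- Uniqueness of dominated splittings. If a diffeomorphism (modelled by
an invertible bounded linear cocycle `Df` over `f`) admits two dominated splittings
`TM = E₁ ⊕≻ F₁ = E₂ ⊕≻ F₂` of constant dimensions, then `dim E₁ = dim E₂` implies
`E₁ = E₂` and `F₁ = F₂`, while `dim E₁ < dim E₂` implies `E₁ ⊆ E₂`. -/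
theorem stmt_10
    {X V : Type*} [NormedAddCommGroup V] [InnerProductSpace ℝ V]
    [FiniteDimensional ℝ V]
    (f : X → X) (hf : Function.Bijective f)
    (Df : X → V ≃ₗ[ℝ] V)
    (Dfn : ℕ → X → V →ₗ[ℝ] V)
    (hDfn0 : ∀ x, Dfn 0 x = LinearMap.id)
    (hDfnS : ∀ n x, Dfn (n + 1) x = ((Df (f^[n] x) : V →ₗ[ℝ] V).comp (Dfn n x)))
    (K : ℝ) (hK : ∀ x v, ‖(Df x) v‖ ≤ K * ‖v‖ ∧ ‖v‖ ≤ K * ‖(Df x) v‖)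
    (E1 F1 E2 F2 : X → Submodule ℝ V)
    (hcompl1 : ∀ x, IsCompl (E1 x) (F1 x)) (hcompl2 : ∀ x, IsCompl (E2 x) (F2 x))
    (hinvE1 : ∀ x, (E1 x).map (Df x : V →ₗ[ℝ] V) = E1 (f x))
    (hinvF1 : ∀ x, (F1 x).map (Df x : V →ₗ[ℝ] V) = F1 (f x))
    (hinvE2 : ∀ x, (E2 x).map (Df x : V →ₗ[ℝ] V) = E2 (f x))
    (hinvF2 : ∀ x, (F2 x).map (Df x : V →ₗ[ℝ] V) = F2 (f x))
    (d1 d2 : ℕ)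
    (hd1 : ∀ x, Module.finrank ℝ (E1 x) = d1)
    (hd2 : ∀ x, Module.finrank ℝ (E2 x) = d2)
    (c1 σ1 : ℝ) (hc1 : 0 < c1) (hσ1 : 0 < σ1) (hσ1' : σ1 < 1)
    (hdom1 : ∀ n : ℕ, 1 ≤ n → ∀ x, ∀ v ∈ E1 x, ∀ w ∈ F1 x,
      ‖Dfn n x w‖ * ‖v‖ ≤ c1 * σ1 ^ n * (‖w‖ * ‖Dfn n x v‖))
    (c2 σ2 : ℝ) (hc2 : 0 < c2) (hσ2 : 0 < σ2) (hσ2' : σ2 < 1)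
    (hdom2 : ∀ n : ℕ, 1 ≤ n → ∀ x, ∀ v ∈ E2 x, ∀ w ∈ F2 x,
      ‖Dfn n x w‖ * ‖v‖ ≤ c2 * σ2 ^ n * (‖w‖ * ‖Dfn n x v‖)) :
    (d1 = d2 → ∀ x, E1 x = E2 x ∧ F1 x = F2 x) ∧
    (d1 < d2 → ∀ x, E1 x ≤ E2 x) := by
  classical
  -- injectivity of the iterated cocycle
  have hinj : ∀ (n : ℕ) (x : X), Function.Injective (Dfn n x) := by
    intro n
    induction n with
    | zero => intro x; rw [hDfn0]; exact fun a b h => h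
    | succ n ih =>
      intro x a b h
      rw [hDfnS] at h
      simp only [LinearMap.comp_apply] at h
      exact ih x ((Df (f^[n] x)).injective h)
  -- invariance of bundles under the iterated cocycle
  have hmap : ∀ (E : X → Submodule ℝ V), (∀ x, (E x).map (Df x : V →ₗ[ℝ] V) = E (f x)) →
      ∀ (n : ℕ) (x : X), (E x).map (Dfn n x) = E (f^[n] x) := by
    intro E hinv n
    induction n with
    | zero => intro x; simp [hDfn0]
    | succ n ih =>
      intro x
      rw [hDfnS, Submodule.map_comp, ih x, hinv, Function.iterate_succ_apply' f n x]
  -- pulling back vectors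
  have hpull : ∀ (E : X → Submodule ℝ V), (∀ x, (E x).map (Df x : V →ₗ[ℝ] V) = E (f x)) →
      ∀ (n : ℕ) (y : X) (v : V), v ∈ E (f^[n] y) → ∃ u, u ∈ E y ∧ Dfn n y u = v := by
    intro E hinv n y v hv
    rw [← hmap E hinv n y] at hv
    obtain ⟨u, hu, hu'⟩ := hv
    exact ⟨u, hu, hu'⟩
  -- rank of complements
  have hrk : ∀ (E F : Submodule ℝ V), IsCompl E F →
      Module.finrank ℝ E + Module.finrank ℝ F = Module.finrank ℝ V := by
    intro E F h
    have h2 := Submodule.finrank_sup_add_finrank_inf_eq E F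
    rw [h.sup_eq_top, h.inf_eq_bot] at h2
    simpa using h2.symm
  -- decompositions
  have hdecomp : ∀ (E F : Submodule ℝ V), IsCompl E F → ∀ v : V,
      ∃ e ∈ E, ∃ g ∈ F, v = e + g := by
    intro E F h v
    have hv : v ∈ E ⊔ F := by rw [h.sup_eq_top]; trivial
    obtain ⟨e, he, g, hg, hegv⟩ := Submodule.mem_sup.mp hv
    exact ⟨e, he, g, hg, hegv.symm⟩
  -- geometric smallness
  have hgeom : ∀ (A ρ δ : ℝ), 0 ≤ ρ → ρ < 1 → 0 < δ →
      ∀ᶠ n : ℕ in Filter.atTop, A * ρ ^ n < δ := by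
    intro A ρ δ h1 h2 h3
    exact ((tendsto_pow_atTop_nhds_zero_of_lt_one h1 h2).const_mul A).eventually_lt_const
      (by simpa using h3)
  -- norms of images of nonzero vectors are positive
  have hpos : ∀ (n : ℕ) (x : X) (v : V), v ≠ 0 → 0 < ‖Dfn n x v‖ := by
    intro n x v hv
    rw [norm_pos_iff]
    intro h0
    exact hv (hinj n x (by rw [h0, map_zero]))
  have hσσ : (0:ℝ) ≤ σ1 * σ2 := by positivity
  have hσσ' : σ1 * σ2 < 1 := by nlinarith
  ------------------------------------------------------------------
  -- Strict case : d1 < d2 → E1 ⊆ E2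
  ------------------------------------------------------------------
  have hlt : d1 < d2 → ∀ x, E1 x ≤ E2 x := by
    intro hd x v hv
    obtain ⟨e, he, g, hg, hveg⟩ := hdecomp (E2 x) (F2 x) (hcompl2 x) v
    by_cases hg0 : g = 0
    · rw [hveg, hg0, add_zero]; exact he
    exfalso
    have hgpos : 0 < ‖g‖ := norm_pos_iff.mpr hg0
    obtain ⟨n, hev, hn1⟩ := (((hgeom (c1 * c2 * ‖v‖) (σ1 * σ2) (‖g‖ / 2) hσσ hσσ'
        (by positivity)).and (hgeom (c2 * ‖e‖) σ2 (‖g‖ / 2) hσ2.le hσ2'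
        (by positivity))).and (Filter.eventually_ge_atTop 1)).exists
    obtain ⟨hn2, hn3⟩ := hev
    obtain ⟨y, hy⟩ := (hf.surjective.iterate n) x
    obtain ⟨vt, hvt, hvtv⟩ := hpull E1 hinvE1 n y v (by rw [hy]; exact hv)
    obtain ⟨et, het, hete⟩ := hpull E2 hinvE2 n y e (by rw [hy]; exact he)
    obtain ⟨gg, hgg, hggg⟩ := hpull F2 hinvF2 n y g (by rw [hy]; exact hg)
    have hsum : vt = et + gg := by
      apply hinj n y
      rw [map_add, hvtv, hete, hggg, hveg]
    have hgg0 : gg ≠ 0 := by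
      intro h0
      rw [h0, map_zero] at hggg
      exact hg0 hggg.symm
    have hggpos : 0 < ‖gg‖ := norm_pos_iff.mpr hgg0
    -- nonzero vector in E2 y ⊓ F1 y
    have hne : E2 y ⊓ F1 y ≠ ⊥ := by
      intro hbot
      have h1 := hrk (E1 y) (F1 y) (hcompl1 y)
      have h2 := Submodule.finrank_sup_add_finrank_inf_eq (E2 y) (F1 y)
      have h3 := Submodule.finrank_le (E2 y ⊔ F1 y)
      rw [hbot] at h2
      rw [hd1 y] at h1
      rw [hd2 y] at h2
      simp only [finrank_bot, add_zero] at h2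
      omega
    obtain ⟨z, hz, hz0⟩ := Submodule.exists_mem_ne_zero_of_ne_bot hne
    obtain ⟨hzE, hzF⟩ := Submodule.mem_inf.mp hz
    have hzpos : 0 < ‖z‖ := norm_pos_iff.mpr hz0
    have hDzpos : 0 < ‖Dfn n y z‖ := hpos n y z hz0
    -- dominations
    have i1 := hdom1 n hn1 y vt hvt z hzF
    rw [hvtv] at i1
    have i2 := hdom2 n hn1 y z hzE gg hgg
    rw [hggg] at i2
    have i3 := hdom2 n hn1 y et het gg hgg
    rw [hggg, hete] at i3
    -- i1 : ‖Dfn n y z‖ * ‖vt‖ ≤ c1 * σ1 ^ n * (‖z‖ * ‖v‖)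
    -- i2 : ‖g‖ * ‖z‖ ≤ c2 * σ2 ^ n * (‖gg‖ * ‖Dfn n y z‖)
    have m1 : (‖Dfn n y z‖ * ‖vt‖) * (‖g‖ * ‖z‖) ≤
        (c1 * σ1 ^ n * (‖z‖ * ‖v‖)) * (c2 * σ2 ^ n * (‖gg‖ * ‖Dfn n y z‖)) :=
      mul_le_mul i1 i2 (by positivity) (by positivity)
    have m2 : (‖g‖ * ‖vt‖) * (‖Dfn n y z‖ * ‖z‖) ≤
        (c1 * c2 * ((σ1 * σ2) ^ n) * (‖v‖ * ‖gg‖)) * (‖Dfn n y z‖ * ‖z‖) := by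
      rw [mul_pow]; linarith [m1]
    have hvtb : ‖g‖ * ‖vt‖ ≤ c1 * c2 * ((σ1 * σ2) ^ n) * (‖v‖ * ‖gg‖) :=
      le_of_mul_le_mul_right m2 (by positivity)
    have htri : ‖gg‖ ≤ ‖vt‖ + ‖et‖ := by
      have h : gg = vt - et := by rw [hsum]; abel
      rw [h]; exact norm_sub_le _ _
    have hfin : ‖g‖ * ‖gg‖ < ‖g‖ * ‖gg‖ := by
      have p1 : (c1 * c2 * ‖v‖ * (σ1 * σ2) ^ n) * ‖gg‖ < (‖g‖ / 2) * ‖gg‖ :=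
        mul_lt_mul_of_pos_right hn2 hggpos
      have p2 : (c2 * ‖e‖ * σ2 ^ n) * ‖gg‖ < (‖g‖ / 2) * ‖gg‖ :=
        mul_lt_mul_of_pos_right hn3 hggpos
      have p3 : ‖g‖ * ‖gg‖ ≤ ‖g‖ * ‖vt‖ + ‖g‖ * ‖et‖ := by
        have h := mul_le_mul_of_nonneg_left htri (norm_nonneg g)
        linarith [h]
      linarith [hvtb, i3, p1, p2, p3]
    exact lt_irrefl _ hfin
  ------------------------------------------------------------------
  -- Equal case, step 1 : F1 = F2
  ------------------------------------------------------------------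
  have hFrk : d1 = d2 → ∀ x,
      Module.finrank ℝ (F1 x) = Module.finrank ℝ (F2 x) := by
    intro hd x
    have h1 := hrk (E1 x) (F1 x) (hcompl1 x)
    have h2 := hrk (E2 x) (F2 x) (hcompl2 x)
    rw [hd1 x] at h1; rw [hd2 x] at h2
    omega
  have hFeq : d1 = d2 → ∀ x, F1 x = F2 x := by
    intro hd x
    have hF2le : F2 x ≤ F1 x := by
      intro w hw
      obtain ⟨a, ha, b, hb, hwab⟩ := hdecomp (E1 x) (F1 x) (hcompl1 x) w
      by_cases ha0 : a = 0
      · rw [hwab, ha0, zero_add]; exact hb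
      exfalso
      have hapos : 0 < ‖a‖ := norm_pos_iff.mpr ha0
      -- first show F1 x ≤ F2 x
      have hF1le : F1 x ≤ F2 x := by
        intro wt hwt
        obtain ⟨et, het, wt', hwt', hwe⟩ := hdecomp (E2 x) (F2 x) (hcompl2 x) wt
        by_cases het0 : et = 0
        · rw [hwe, het0, zero_add]; exact hwt'
        exfalso
        have hetpos : 0 < ‖et‖ := norm_pos_iff.mpr het0
        obtain ⟨n, hev, hn1⟩ := ((((hgeom (c1 * ‖b‖) σ1 (‖a‖ / 2) hσ1.le hσ1'
            (by positivity)).and (hgeom (2 * c1 * c2 * ‖wt‖ * ‖w‖) (σ1 * σ2)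
            (‖a‖ * ‖et‖ / 2) hσσ hσσ' (by positivity))).and
            (hgeom (c2 * ‖wt'‖ * ‖a‖) σ2 (‖a‖ * ‖et‖ / 2) hσ2.le hσ2'
            (by positivity))).and (Filter.eventually_ge_atTop 1)).exists
        obtain ⟨⟨hn2, hn3⟩, hn4⟩ := hev
        have hDetpos : 0 < ‖Dfn n x et‖ := hpos n x et het0
        -- dominations at x
        have db := hdom1 n hn1 x a ha b hb
        -- db : ‖Dfn n x b‖ * ‖a‖ ≤ c1 * σ1 ^ n * (‖b‖ * ‖Dfn n x a‖)
        have hb2 : ‖Dfn n x b‖ ≤ ‖Dfn n x a‖ / 2 := by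
          have h' : ‖Dfn n x b‖ * ‖a‖ ≤ (‖Dfn n x a‖ / 2) * ‖a‖ := by
            have h'' := mul_le_mul_of_nonneg_right hn2.le (norm_nonneg (Dfn n x a))
            linarith [db, h'']
          exact le_of_mul_le_mul_right h' hapos
        have hDwsum : Dfn n x w = Dfn n x a + Dfn n x b := by rw [hwab, map_add]
        have ha2 : ‖Dfn n x a‖ ≤ 2 * ‖Dfn n x w‖ := by
          have h : ‖Dfn n x a‖ ≤ ‖Dfn n x w‖ + ‖Dfn n x b‖ := by
            have h' : Dfn n x a = Dfn n x w - Dfn n x b := by rw [hDwsum]; abel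
            rw [h']; exact norm_sub_le _ _
          linarith
        have dwt := hdom1 n hn1 x a ha wt hwt
        -- dwt : ‖Dfn n x wt‖ * ‖a‖ ≤ c1 * σ1 ^ n * (‖wt‖ * ‖Dfn n x a‖)
        have dw := hdom2 n hn1 x et het w hw
        -- dw : ‖Dfn n x w‖ * ‖et‖ ≤ c2 * σ2 ^ n * (‖w‖ * ‖Dfn n x et‖)
        have dwt' := hdom2 n hn1 x et het wt' hwt'
        -- dwt' : ‖Dfn n x wt'‖ * ‖et‖ ≤ c2 * σ2 ^ n * (‖wt'‖ * ‖Dfn n x et‖)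
        -- s1 : ‖Dfn n x wt‖ * ‖a‖ ≤ 2 * c1 * σ1 ^ n * ‖wt‖ * ‖Dfn n x w‖
        have s1 : ‖Dfn n x wt‖ * ‖a‖ ≤ 2 * c1 * σ1 ^ n * ‖wt‖ * ‖Dfn n x w‖ := by
          have h'' := mul_le_mul_of_nonneg_left ha2
            (by positivity : (0:ℝ) ≤ c1 * σ1 ^ n * ‖wt‖)
          linarith [dwt, h'']
        -- s2 : ‖Dfn n x wt‖ * ‖a‖ * ‖et‖ ≤ 2*c1*c2*(σ1*σ2)^n*‖wt‖*‖w‖*‖Dfn n x et‖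
        have s2 : ‖Dfn n x wt‖ * ‖a‖ * ‖et‖ ≤
            2 * c1 * c2 * ‖wt‖ * ‖w‖ * (σ1 * σ2) ^ n * ‖Dfn n x et‖ := by
          have t1 : ‖Dfn n x wt‖ * ‖a‖ * ‖et‖ ≤
              (2 * c1 * σ1 ^ n * ‖wt‖) * (‖Dfn n x w‖ * ‖et‖) := by
            have h'' := mul_le_mul_of_nonneg_right s1 (norm_nonneg et)
            linarith [h'']
          have t2 : (2 * c1 * σ1 ^ n * ‖wt‖) * (‖Dfn n x w‖ * ‖et‖) ≤
              (2 * c1 * σ1 ^ n * ‖wt‖) * (c2 * σ2 ^ n * (‖w‖ * ‖Dfn n x et‖)) :=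
            mul_le_mul_of_nonneg_left dw (by positivity)
          calc ‖Dfn n x wt‖ * ‖a‖ * ‖et‖ ≤
              (2 * c1 * σ1 ^ n * ‖wt‖) * (c2 * σ2 ^ n * (‖w‖ * ‖Dfn n x et‖)) :=
                le_trans t1 t2
            _ = 2 * c1 * c2 * ‖wt‖ * ‖w‖ * (σ1 * σ2) ^ n * ‖Dfn n x et‖ := by
                rw [mul_pow]; ring
        -- s3
        have s3 : ‖Dfn n x wt'‖ * ‖et‖ * ‖a‖ ≤
            c2 * ‖wt'‖ * ‖a‖ * σ2 ^ n * ‖Dfn n x et‖ := by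
          have h'' := mul_le_mul_of_nonneg_right dwt' (norm_nonneg a)
          linarith [h'']
        -- triangle
        have s4 : ‖Dfn n x et‖ ≤ ‖Dfn n x wt‖ + ‖Dfn n x wt'‖ := by
          have h' : Dfn n x et = Dfn n x wt - Dfn n x wt' := by
            rw [hwe, map_add]; abel
          rw [h']; exact norm_sub_le _ _
        have p1 : (2 * c1 * c2 * ‖wt‖ * ‖w‖ * (σ1 * σ2) ^ n) * ‖Dfn n x et‖ <
            (‖a‖ * ‖et‖ / 2) * ‖Dfn n x et‖ := mul_lt_mul_of_pos_right hn3 hDetpos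
        have p2 : (c2 * ‖wt'‖ * ‖a‖ * σ2 ^ n) * ‖Dfn n x et‖ <
            (‖a‖ * ‖et‖ / 2) * ‖Dfn n x et‖ := mul_lt_mul_of_pos_right hn4 hDetpos
        have p3 : ‖Dfn n x et‖ * (‖a‖ * ‖et‖) ≤
            ‖Dfn n x wt‖ * (‖a‖ * ‖et‖) + ‖Dfn n x wt'‖ * (‖a‖ * ‖et‖) := by
          have h'' := mul_le_mul_of_nonneg_right s4
            (by positivity : (0:ℝ) ≤ ‖a‖ * ‖et‖)
          linarith [h'']
        have hfin : ‖Dfn n x et‖ * (‖a‖ * ‖et‖) < ‖Dfn n x et‖ * (‖a‖ * ‖et‖) := by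
          linarith [s2, s3, p1, p2, p3]
        exact lt_irrefl _ hfin
      -- now F1 x = F2 x, so w ∈ F1 x, forcing a = 0
      have hF12 : F1 x = F2 x :=
        Submodule.eq_of_le_of_finrank_eq hF1le (hFrk hd x)
      have hwF1 : w ∈ F1 x := by rw [hF12]; exact hw
      have haF1 : a ∈ F1 x := by
        have h' : a = w - b := by rw [hwab]; abel
        rw [h']; exact Submodule.sub_mem _ hwF1 hb
      exact ha0 (Submodule.disjoint_def.mp (hcompl1 x).disjoint a ha haF1)
    exact (Submodule.eq_of_le_of_finrank_eq hF2le (hFrk hd x).symm).symm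
  ------------------------------------------------------------------
  -- Equal case, step 2 : E1 = E2 (backward argument using F1 = F2)
  ------------------------------------------------------------------
  have hEeq : d1 = d2 → ∀ x, E1 x = E2 x := by
    intro hd x
    have hE1le : E1 x ≤ E2 x := by
      intro v hv
      obtain ⟨e, he, g, hg, hveg⟩ := hdecomp (E2 x) (F2 x) (hcompl2 x) v
      by_cases hg0 : g = 0
      · rw [hveg, hg0, add_zero]; exact he
      exfalso
      have hgpos : 0 < ‖g‖ := norm_pos_iff.mpr hg0
      obtain ⟨n, hev, hn1⟩ := (((hgeom (c1 * ‖v‖) σ1 (‖g‖ / 2) hσ1.le hσ1'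
          (by positivity)).and (hgeom (c2 * ‖e‖) σ2 (‖g‖ / 2) hσ2.le hσ2'
          (by positivity))).and (Filter.eventually_ge_atTop 1)).exists
      obtain ⟨hn2, hn3⟩ := hev
      obtain ⟨y, hy⟩ := (hf.surjective.iterate n) x
      obtain ⟨vt, hvt, hvtv⟩ := hpull E1 hinvE1 n y v (by rw [hy]; exact hv)
      obtain ⟨et, het, hete⟩ := hpull E2 hinvE2 n y e (by rw [hy]; exact he)
      obtain ⟨gg, hgg, hggg⟩ := hpull F2 hinvF2 n y g (by rw [hy]; exact hg)
      have hsum : vt = et + gg := by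
        apply hinj n y
        rw [map_add, hvtv, hete, hggg, hveg]
      have hgg0 : gg ≠ 0 := by
        intro h0
        rw [h0, map_zero] at hggg
        exact hg0 hggg.symm
      have hggpos : 0 < ‖gg‖ := norm_pos_iff.mpr hgg0
      have hggF1 : gg ∈ F1 y := by rw [hFeq hd y]; exact hgg
      have i1 := hdom1 n hn1 y vt hvt gg hggF1
      rw [hvtv, hggg] at i1
      -- i1 : ‖g‖ * ‖vt‖ ≤ c1 * σ1 ^ n * (‖gg‖ * ‖v‖)
      have i2 := hdom2 n hn1 y et het gg hgg
      rw [hggg, hete] at i2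
      -- i2 : ‖g‖ * ‖et‖ ≤ c2 * σ2 ^ n * (‖gg‖ * ‖e‖)
      have htri : ‖gg‖ ≤ ‖vt‖ + ‖et‖ := by
        have h : gg = vt - et := by rw [hsum]; abel
        rw [h]; exact norm_sub_le _ _
      have hfin : ‖g‖ * ‖gg‖ < ‖g‖ * ‖gg‖ := by
        have p1 : (c1 * ‖v‖ * σ1 ^ n) * ‖gg‖ < (‖g‖ / 2) * ‖gg‖ :=
          mul_lt_mul_of_pos_right hn2 hggpos
        have p2 : (c2 * ‖e‖ * σ2 ^ n) * ‖gg‖ < (‖g‖ / 2) * ‖gg‖ :=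
          mul_lt_mul_of_pos_right hn3 hggpos
        have p3 : ‖g‖ * ‖gg‖ ≤ ‖g‖ * ‖vt‖ + ‖g‖ * ‖et‖ := by
          have h := mul_le_mul_of_nonneg_left htri (norm_nonneg g)
          linarith [h]
        linarith [i1, i2, p1, p2, p3]
      exact lt_irrefl _ hfin
    have hrkE : Module.finrank ℝ (E1 x) = Module.finrank ℝ (E2 x) := by
      rw [hd1 x, hd2 x]; exact hd
    exact Submodule.eq_of_le_of_finrank_eq hE1le hrkE
  exact ⟨fun hd x => ⟨hEeq hd x, hFeq hd x⟩, hlt⟩
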